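/- Let x ≥ 0. The indicator ‖x‖₀ (which is 0 if x = 0 and 1 otherwise) satisfies ‖x‖₀ = lim_{ς→0⁺} ln(1 + x/ς)/ln(1 + 1/ς) for all x ∈ [0, 1], and the convergence is monotone nonincreasing in ς for fixed x ∈ (0,1]. -/

import Mathlib

open Filter

private lemma aux_k_mono : MonotoneOn (fun s : ℝ => (1 + s) * Real.log (1 + s) / s) (Set.Ioi 0) := by
  have hderiv : ∀ s : ℝ, 0 < s → HasDerivAt (fun s : ℝ => (1 + s) * Real.log (1 + s) / s)
      (((1 * Real.log (1 + s) + (1 + s) * (1 / (1 + s))) * s - (1 + s) * Real.log (1 + s) * 1) / s ^ 2) s := by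
    intro s hs
    have h1 : HasDerivAt (fun s : ℝ => 1 + s) 1 s := by
      simpa using (hasDerivAt_id s).const_add 1
    have h1s : (0:ℝ) < 1 + s := by linarith
    have h2 : HasDerivAt (fun s : ℝ => Real.log (1 + s)) (1 / (1 + s)) s := by
      simpa using h1.log h1s.ne'
    exact ((h1.mul h2).div (hasDerivAt_id s) hs.ne')
  apply monotoneOn_of_deriv_nonneg (convex_Ioi 0)
  · intro s hs
    exact ((hderiv s hs).continuousAt).continuousWithinAt
  · intro s hs
    rw [interior_Ioi] at hs
    exact (hderiv s hs).differentiableAt.differentiableWithinAt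
  · intro s hs
    rw [interior_Ioi] at hs
    have hs' : (0:ℝ) < s := hs
    rw [(hderiv s hs').deriv]
    have h1s : (0:ℝ) < 1 + s := by linarith
    have hlog : Real.log (1 + s) ≤ s := by
      have := Real.log_le_sub_one_of_pos h1s
      linarith
    have hnum : 0 ≤ (1 * Real.log (1 + s) + (1 + s) * (1 / (1 + s))) * s - (1 + s) * Real.log (1 + s) * 1 := by
      have : (1 + s) * (1 / (1 + s)) = 1 := by field_simp
      rw [this]; nlinarith
    positivity

private lemma aux_ineq {x t : ℝ} (hx : 0 < x) (hx1 : x ≤ 1) (ht : 0 < t) :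
    (1 + x * t) * Real.log (1 + x * t) ≤ x * ((1 + t) * Real.log (1 + t)) := by
  have hu : 0 < x * t := mul_pos hx ht
  have hut : x * t ≤ t := by nlinarith
  have := aux_k_mono (Set.mem_Ioi.2 hu) (Set.mem_Ioi.2 ht) hut
  -- (1+xt)*log(1+xt)/(xt) ≤ (1+t)*log(1+t)/t
  rw [div_le_div_iff₀ hu ht] at this
  nlinarith

private lemma aux_g_mono {x : ℝ} (hx : 0 < x) (hx1 : x ≤ 1) :
    MonotoneOn (fun t : ℝ => Real.log (1 + x * t) / Real.log (1 + t)) (Set.Ioi 0) := by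
  have hderiv : ∀ t : ℝ, 0 < t → HasDerivAt (fun t : ℝ => Real.log (1 + x * t) / Real.log (1 + t))
      ((x / (1 + x * t) * Real.log (1 + t) - Real.log (1 + x * t) * (1 / (1 + t))) / (Real.log (1 + t)) ^ 2) t := by
    intro t ht
    have h1t : (0:ℝ) < 1 + t := by linarith
    have hxt : (0:ℝ) < 1 + x * t := by nlinarith
    have hnum : HasDerivAt (fun t : ℝ => Real.log (1 + x * t)) (x / (1 + x * t)) t := by
      have h : HasDerivAt (fun t : ℝ => 1 + x * t) x t := by
        simpa using ((hasDerivAt_id t).const_mul x).const_add 1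
      simpa [div_eq_mul_inv, mul_comm] using h.log hxt.ne'
    have hden : HasDerivAt (fun t : ℝ => Real.log (1 + t)) (1 / (1 + t)) t := by
      have h : HasDerivAt (fun t : ℝ => 1 + t) 1 t := by
        simpa using (hasDerivAt_id t).const_add 1
      simpa using h.log h1t.ne'
    have hlogne : Real.log (1 + t) ≠ 0 := (Real.log_pos (by linarith)).ne'
    exact hnum.div hden hlogne
  apply monotoneOn_of_deriv_nonneg (convex_Ioi 0)
  · intro t ht
    exact ((hderiv t ht).continuousAt).continuousWithinAt
  · intro t ht
    rw [interior_Ioi] at ht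
    exact (hderiv t ht).differentiableAt.differentiableWithinAt
  · intro t ht
    rw [interior_Ioi] at ht
    have ht' : (0:ℝ) < t := ht
    rw [(hderiv t ht').deriv]
    have h1t : (0:ℝ) < 1 + t := by linarith
    have hxt : (0:ℝ) < 1 + x * t := by nlinarith
    have hnum : 0 ≤ x / (1 + x * t) * Real.log (1 + t) - Real.log (1 + x * t) * (1 / (1 + t)) := by
      rw [sub_nonneg, mul_one_div, div_mul_eq_mul_div, div_le_div_iff₀ h1t hxt]
      have := aux_ineq hx hx1 ht
      nlinarith
    positivity

/-- For `x ∈ [0,1]`, the smoothed ℓ0 approximant `ln(1 + x/ς)/ln(1 + 1/ς)` tends to the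
indicator `‖x‖₀` (0 if `x = 0`, 1 otherwise) as `ς → 0⁺`, and for `x ∈ (0,1]` it is
monotone nonincreasing in `ς`. -/
theorem smoothed_l0_limit_and_monotone (x : ℝ) (hx0 : 0 ≤ x) (hx1 : x ≤ 1) :
    Tendsto (fun ς : ℝ => Real.log (1 + x / ς) / Real.log (1 + 1 / ς))
      (nhdsWithin 0 (Set.Ioi 0)) (nhds (if x = 0 then 0 else 1)) ∧
    (0 < x → ∀ ς₁ ς₂ : ℝ, 0 < ς₁ → ς₁ ≤ ς₂ →
      Real.log (1 + x / ς₂) / Real.log (1 + 1 / ς₂) ≤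
        Real.log (1 + x / ς₁) / Real.log (1 + 1 / ς₁)) := by
  constructor
  · by_cases hx : x = 0
    · simp only [hx, if_pos, zero_div, add_zero, Real.log_one]
      simpa using tendsto_const_nhds (α := ℝ) (f := nhdsWithin 0 (Set.Ioi 0)) (a := (0:ℝ))
    · rw [if_neg hx]
      have hxpos : 0 < x := lt_of_le_of_ne hx0 (Ne.symm hx)
      have hlogbot : Tendsto Real.log (nhdsWithin 0 (Set.Ioi 0)) atBot :=
        Real.tendsto_log_nhdsGT_zero
      have hlogtop : Tendsto (fun ς : ℝ => -Real.log ς) (nhdsWithin 0 (Set.Ioi 0)) atTop :=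
        tendsto_neg_atBot_atTop.comp hlogbot
      have hA : Tendsto (fun ς : ℝ => -Real.log (ς + x)) (nhdsWithin 0 (Set.Ioi 0)) (nhds (-Real.log x)) := by
        have h1 : Tendsto (fun ς : ℝ => ς + x) (nhdsWithin 0 (Set.Ioi 0)) (nhds x) := by
          have : Tendsto (fun ς : ℝ => ς + x) (nhds 0) (nhds (0 + x)) :=
            tendsto_id.add tendsto_const_nhds
          simpa using this.mono_left nhdsWithin_le_nhds
        exact (((Real.continuousAt_log hxpos.ne').tendsto.comp h1).neg)
      have hB : Tendsto (fun ς : ℝ => -Real.log (ς + 1)) (nhdsWithin 0 (Set.Ioi 0)) (nhds (-Real.log 1)) := by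
        have h1 : Tendsto (fun ς : ℝ => ς + 1) (nhdsWithin 0 (Set.Ioi 0)) (nhds 1) := by
          have : Tendsto (fun ς : ℝ => ς + 1) (nhds 0) (nhds (0 + 1)) :=
            tendsto_id.add tendsto_const_nhds
          simpa using this.mono_left nhdsWithin_le_nhds
        exact (((Real.continuousAt_log one_ne_zero).tendsto.comp h1).neg)
      have hA0 : Tendsto (fun ς : ℝ => Real.log (ς + x) / Real.log ς) (nhdsWithin 0 (Set.Ioi 0)) (nhds 0) := by
        have := hA.div_atTop hlogtop
        refine this.congr ?_
        intro ς; rw [neg_div_neg_eq]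
      have hB0 : Tendsto (fun ς : ℝ => Real.log (ς + 1) / Real.log ς) (nhdsWithin 0 (Set.Ioi 0)) (nhds 0) := by
        have := hB.div_atTop hlogtop
        refine this.congr ?_
        intro ς; rw [neg_div_neg_eq]
      have hmain : Tendsto (fun ς : ℝ => (Real.log (ς + x) / Real.log ς - 1) / (Real.log (ς + 1) / Real.log ς - 1))
          (nhdsWithin 0 (Set.Ioi 0)) (nhds 1) := by
        have := ((hA0.sub_const 1).div (hB0.sub_const 1) (by norm_num))
        norm_num at this
        exact this
      refine hmain.congr' ?_
      have h1 : ∀ᶠ ς : ℝ in nhdsWithin 0 (Set.Ioi 0), ς < 1 :=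
        mem_nhdsWithin_of_mem_nhds (Iio_mem_nhds one_pos)
      have h2 : ∀ᶠ ς : ℝ in nhdsWithin 0 (Set.Ioi 0), ς ∈ Set.Ioi (0:ℝ) := self_mem_nhdsWithin
      filter_upwards [h1, h2] with ς hς1 hς0
      rw [Set.mem_Ioi] at hς0
      have hlogς : Real.log ς < 0 := Real.log_neg hς0 hς1
      have hlogne : Real.log ς ≠ 0 := hlogς.ne
      have e1 : Real.log (1 + x / ς) = Real.log (ς + x) - Real.log ς := by
        rw [show (1:ℝ) + x / ς = (ς + x) / ς by field_simp]
        exact Real.log_div (by positivity) hς0.ne'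
      have e2 : Real.log (1 + 1 / ς) = Real.log (ς + 1) - Real.log ς := by
        rw [show (1:ℝ) + 1 / ς = (ς + 1) / ς by field_simp]
        exact Real.log_div (by positivity) hς0.ne'
      have hCB : Real.log (ς + 1) - Real.log ς ≠ 0 := by
        have : Real.log ς < Real.log (ς + 1) := Real.log_lt_log hς0 (by linarith)
        exact sub_ne_zero.mpr this.ne'
      rw [e1, e2, div_sub_one hlogne, div_sub_one hlogne]
      field_simp
  · intro hxpos ς₁ ς₂ hς₁ h12
    have hς₂ : 0 < ς₂ := lt_of_lt_of_le hς₁ h12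
    have ha : (0:ℝ) < 1 / ς₂ := by positivity
    have hab : 1 / ς₂ ≤ 1 / ς₁ := one_div_le_one_div_of_le hς₁ h12
    have := aux_g_mono hxpos hx1 (Set.mem_Ioi.2 ha) (Set.mem_Ioi.2 (lt_of_lt_of_le ha hab)) hab
    simp only [mul_one_div] at this
    exact this
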